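/- There exists a constant C > 0 such that for all f, g ∈ H^1(ℝ), ∫_ℝ |g(x)| f(x)^2 dx ≤ C (sup_{y ∈ ℝ} ∫_{B(y,1/2)} (f'^2 + f^2 + g'^2 + g^2) dx)^{1/2} · (‖f‖_{H^1}^2 + ‖g‖_{H^1}^2). -/

import Mathlib

open MeasureTheory Set

theorem stmt_2 :
    ∃ C > 0, ∀ (f f' g g' : ℝ → ℝ),
      (∀ x, HasDerivAt f (f' x) x) → MemLp f 2 (volume : Measure ℝ) →
      MemLp f' 2 (volume : Measure ℝ) →
      (∀ x, HasDerivAt g (g' x) x) → MemLp g 2 (volume : Measure ℝ) →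
      MemLp g' 2 (volume : Measure ℝ) →
      ∫ x : ℝ, |g x| * f x ^ 2 ≤
        C * Real.sqrt (⨆ y : ℝ, ∫ x in Ioo (y - 1/2) (y + 1/2),
              (f' x ^ 2 + f x ^ 2 + g' x ^ 2 + g x ^ 2))
          * ((∫ x : ℝ, (f' x ^ 2 + f x ^ 2)) + ∫ x : ℝ, (g' x ^ 2 + g x ^ 2)) := by
  refine ⟨2, by norm_num, ?_⟩
  intro f f' g g' hf hf2 hf'2 hg hg2 hg'2
  set S := ⨆ y : ℝ, ∫ x in Ioo (y - 1/2) (y + 1/2),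
      (f' x ^ 2 + f x ^ 2 + g' x ^ 2 + g x ^ 2) with hSdef
  have hIf2 : Integrable (fun x : ℝ => f x ^ 2) := hf2.integrable_sq
  have hIf'2 : Integrable (fun x : ℝ => f' x ^ 2) := hf'2.integrable_sq
  have hIg2 : Integrable (fun x : ℝ => g x ^ 2) := hg2.integrable_sq
  have hIg'2 : Integrable (fun x : ℝ => g' x ^ 2) := hg'2.integrable_sq
  have hIh : Integrable (fun x : ℝ => f' x ^ 2 + f x ^ 2 + g' x ^ 2 + g x ^ 2) :=
    ((hIf'2.add hIf2).add hIg'2).add hIg2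
  have hbdd : BddAbove (Set.range fun y : ℝ => ∫ x in Ioo (y - 1/2) (y + 1/2),
      (f' x ^ 2 + f x ^ 2 + g' x ^ 2 + g x ^ 2)) := by
    refine ⟨∫ x : ℝ, (f' x ^ 2 + f x ^ 2 + g' x ^ 2 + g x ^ 2), ?_⟩
    rintro _ ⟨y, rfl⟩
    exact setIntegral_le_integral hIh (Filter.Eventually.of_forall fun x => by positivity)
  have hIS : ∀ y : ℝ, (∫ x in Ioo (y - 1/2) (y + 1/2),
      (f' x ^ 2 + f x ^ 2 + g' x ^ 2 + g x ^ 2)) ≤ S := fun y => le_ciSup hbdd y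
  have hS0 : 0 ≤ S :=
    le_trans (setIntegral_nonneg measurableSet_Ioo fun x _ => by positivity) (hIS 0)
  -- integrability of 2 g g'
  have hgg' : Integrable (fun x : ℝ => 2 * g x * g' x) := by
    refine Integrable.mono' (hIg2.add hIg'2)
      ((hg2.aestronglyMeasurable.const_mul 2).mul hg'2.aestronglyMeasurable)
      (Filter.Eventually.of_forall fun x => ?_)
    simp only [Pi.add_apply]
    rw [Real.norm_eq_abs, abs_mul, abs_mul, abs_two]
    nlinarith [sq_nonneg (|g x| - |g' x|), abs_nonneg (g x), abs_nonneg (g' x),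
      sq_abs (g x), sq_abs (g' x)]
  -- key pointwise bound
  have key : ∀ x : ℝ, g x ^ 2 ≤ 3 * S := by
    intro x
    have hvol : volume (Ioo (x - 1/2) (x + 1/2)) = 1 := by
      rw [Real.volume_Ioo]; norm_num
    set A := ∫ t in Ioo (x - 1/2) (x + 1/2), g t ^ 2 with hAdef
    have hA0 : 0 ≤ A := setIntegral_nonneg measurableSet_Ioo fun t _ => sq_nonneg _
    have hex : ∃ t ∈ Ioo (x - 1/2) (x + 1/2), g t ^ 2 ≤ 2 * A := by
      by_contra hcon
      push_neg at hcon
      have h1 : (∫ _t in Ioo (x - 1/2) (x + 1/2), (2 * A)) ≤ A := by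
        rw [hAdef]
        exact setIntegral_mono_on (integrableOn_const (by rw [hvol]; norm_num))
          hIg2.integrableOn measurableSet_Ioo (fun t ht => (hcon t ht).le)
      rw [setIntegral_const, Measure.real, hvol] at h1
      simp at h1
      have hA00 : A = 0 := le_antisymm (by linarith) hA0
      have hpos : 0 < A := by
        rw [hAdef, setIntegral_pos_iff_support_of_nonneg_ae
          (Filter.Eventually.of_forall fun t => sq_nonneg _) hIg2.integrableOn]
        have hsub : Ioo (x - 1/2) (x + 1/2) ⊆ Function.support (fun t => g t ^ 2) ∩
            Ioo (x - 1/2) (x + 1/2) := fun t ht =>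
          ⟨by simp only [Function.mem_support]; nlinarith [hcon t ht, hA00], ht⟩
        calc (0 : ENNReal) < 1 := by norm_num
          _ = volume (Ioo (x - 1/2) (x + 1/2)) := hvol.symm
          _ ≤ _ := measure_mono hsub
      exact absurd hA00 (ne_of_gt hpos)
    obtain ⟨t, htI, hgt⟩ := hex
    have hxI : x ∈ Ioo (x - 1/2) (x + 1/2) := ⟨by linarith, by linarith⟩
    have hftc : ∫ y in t..x, 2 * g y * g' y = g x ^ 2 - g t ^ 2 := by
      refine intervalIntegral.integral_eq_sub_of_hasDerivAt (f := fun y => g y ^ 2) (fun y _ => ?_)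
        hgg'.intervalIntegrable
      simpa using (hg y).fun_pow 2
    have habs : |∫ y in t..x, 2 * g y * g' y| ≤
        ∫ y in Ioo (x - 1/2) (x + 1/2), |2 * g y * g' y| := by
      calc |∫ y in t..x, 2 * g y * g' y| = ‖∫ y in t..x, 2 * g y * g' y‖ :=
            (Real.norm_eq_abs _).symm
        _ ≤ ∫ y in Set.uIoc t x, ‖2 * g y * g' y‖ :=
            intervalIntegral.norm_integral_le_integral_norm_uIoc
        _ = ∫ y in Set.uIoc t x, |2 * g y * g' y| := by simp only [Real.norm_eq_abs]
        _ ≤ ∫ y in Ioo (x - 1/2) (x + 1/2), |2 * g y * g' y| := by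
            refine setIntegral_mono_set hgg'.abs.integrableOn
              (Filter.Eventually.of_forall fun y => abs_nonneg _) ?_
            exact HasSubset.Subset.eventuallyLE fun y hy =>
              Set.ordConnected_Ioo.uIcc_subset htI hxI (uIoc_subset_uIcc hy)
    have hb1 : (∫ y in Ioo (x - 1/2) (x + 1/2), |2 * g y * g' y|) ≤
        ∫ y in Ioo (x - 1/2) (x + 1/2), (g' y ^ 2 + g y ^ 2) := by
      refine setIntegral_mono_on hgg'.abs.integrableOn
        (hIg'2.add hIg2).integrableOn measurableSet_Ioo (fun y _ => ?_)
      rw [abs_mul, abs_mul, abs_two]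
      nlinarith [sq_nonneg (|g y| - |g' y|), abs_nonneg (g y), abs_nonneg (g' y),
        sq_abs (g y), sq_abs (g' y)]
    have hb2 : (∫ y in Ioo (x - 1/2) (x + 1/2), (g' y ^ 2 + g y ^ 2)) ≤
        ∫ y in Ioo (x - 1/2) (x + 1/2), (f' y ^ 2 + f y ^ 2 + g' y ^ 2 + g y ^ 2) := by
      refine setIntegral_mono_on (hIg'2.add hIg2).integrableOn
        hIh.integrableOn measurableSet_Ioo (fun y _ => by nlinarith [sq_nonneg (f y), sq_nonneg (f' y)])
    have hA2 : A ≤ ∫ y in Ioo (x - 1/2) (x + 1/2),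
        (f' y ^ 2 + f y ^ 2 + g' y ^ 2 + g y ^ 2) := by
      rw [hAdef]
      refine setIntegral_mono_on hIg2.integrableOn hIh.integrableOn measurableSet_Ioo
        (fun y _ => by nlinarith [sq_nonneg (f y), sq_nonneg (f' y), sq_nonneg (g' y)])
    have := hIS x
    have habs' : g x ^ 2 ≤ g t ^ 2 + |∫ y in t..x, 2 * g y * g' y| := by
      rw [hftc] at *
      cases abs_cases (g x ^ 2 - g t ^ 2) with
      | inl h => linarith [h.1]
      | inr h => linarith [h.1]
    linarith
  -- assemble
  have hgb : ∀ x : ℝ, |g x| ≤ Real.sqrt (3 * S) := fun x => by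
    rw [← Real.sqrt_sq_eq_abs]; exact Real.sqrt_le_sqrt (key x)
  have hmono : (∫ x : ℝ, |g x| * f x ^ 2) ≤ ∫ x : ℝ, Real.sqrt (3 * S) * f x ^ 2 := by
    refine integral_mono_of_nonneg
      (Filter.Eventually.of_forall fun x => mul_nonneg (abs_nonneg _) (sq_nonneg _))
      (hIf2.const_mul _)
      (Filter.Eventually.of_forall fun x => mul_le_mul_of_nonneg_right (hgb x) (sq_nonneg _))
  rw [integral_const_mul] at hmono
  have hsq : Real.sqrt (3 * S) ≤ 2 * Real.sqrt S := by
    rw [Real.sqrt_mul (by norm_num : (0:ℝ) ≤ 3)]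
    have h3 : Real.sqrt 3 ≤ 2 := by
      rw [show (2:ℝ) = Real.sqrt 4 by
        rw [show (4:ℝ) = 2 ^ 2 by norm_num, Real.sqrt_sq (by norm_num)]]
      exact Real.sqrt_le_sqrt (by norm_num)
    exact mul_le_mul_of_nonneg_right h3 (Real.sqrt_nonneg S)
  have hEf : (∫ x : ℝ, f x ^ 2) ≤
      (∫ x : ℝ, (f' x ^ 2 + f x ^ 2)) + ∫ x : ℝ, (g' x ^ 2 + g x ^ 2) := by
    have h1 : (∫ x : ℝ, f x ^ 2) ≤ ∫ x : ℝ, (f' x ^ 2 + f x ^ 2) :=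
      integral_mono hIf2 (hIf'2.add hIf2) fun x => by nlinarith [sq_nonneg (f' x)]
    have h2 : 0 ≤ ∫ x : ℝ, (g' x ^ 2 + g x ^ 2) :=
      integral_nonneg fun x => by positivity
    linarith
  calc (∫ x : ℝ, |g x| * f x ^ 2) ≤ Real.sqrt (3 * S) * ∫ x : ℝ, f x ^ 2 := hmono
    _ ≤ 2 * Real.sqrt S * ((∫ x : ℝ, (f' x ^ 2 + f x ^ 2)) + ∫ x : ℝ, (g' x ^ 2 + g x ^ 2)) :=
        mul_le_mul hsq hEf (integral_nonneg fun x => sq_nonneg _)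
          (by positivity)
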